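/- Let A be an m×m real symmetric positive semidefinite matrix with Moore–Penrose inverse A†, let α be a real scalar with ‖A A† − α A²‖ < 1 in spectral norm, and define the Newton–Raphson iterates A₀ = α A, A_{k+1} = 2 A_k − A_k A A_k. Then the sequence of residuals ‖A A_k A − A‖ is monotonically nonincreasing in k and converges to 0. -/

import Mathlib

open Matrix Filter

/-- The spectral norm (ℓ²-operator norm) of a real square matrix. -/
noncomputable def specNorm {m : ℕ} (M : Matrix (Fin m) (Fin m) ℝ) : ℝ :=
  ‖Matrix.toEuclideanCLM (𝕜 := ℝ) M‖

/-- `Ad` is the Moore–Penrose inverse of `A`: the Penrose equations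
`A Ad A = A`, `Ad A Ad = Ad`, `(A Ad)ᵀ = A Ad`, `(Ad A)ᵀ = Ad A`. -/
def IsMoorePenroseInv {m n : ℕ} (A : Matrix (Fin m) (Fin n) ℝ)
    (Ad : Matrix (Fin n) (Fin m) ℝ) : Prop :=
  A * Ad * A = A ∧ Ad * A * Ad = Ad ∧ (A * Ad)ᵀ = A * Ad ∧ (Ad * A)ᵀ = Ad * A

lemma specNorm_nonneg {m : ℕ} (M : Matrix (Fin m) (Fin m) ℝ) : 0 ≤ specNorm M :=
  norm_nonneg _

lemma specNorm_mul_le {m : ℕ} (X Y : Matrix (Fin m) (Fin m) ℝ) :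
    specNorm (X * Y) ≤ specNorm X * specNorm Y := by
  unfold specNorm
  rw [_root_.map_mul]
  exact norm_mul_le _ _

lemma specNorm_neg {m : ℕ} (X : Matrix (Fin m) (Fin m) ℝ) :
    specNorm (-X) = specNorm X := by
  unfold specNorm
  rw [map_neg, norm_neg]

/-- Under the contraction condition `‖A Ad - α A²‖ < 1`, the residuals
`‖A N_k A - A‖` are monotonically nonincreasing in `k` and converge to `0`. -/
theorem newton_raphson_residual_antitone_tendsto_zero {m : ℕ}
    (A Ad : Matrix (Fin m) (Fin m) ℝ)
    (hA : A.PosSemidef)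
    (hMP : IsMoorePenroseInv A Ad)
    (α : ℝ) (N : ℕ → Matrix (Fin m) (Fin m) ℝ)
    (hN0 : N 0 = α • A)
    (hNrec : ∀ k, N (k + 1) = (2 : ℝ) • N k - N k * A * N k)
    (hinit : specNorm (A * Ad - α • (A * A)) < 1) :
    Antitone (fun k => specNorm (A * N k * A - A)) ∧
      Tendsto (fun k => specNorm (A * N k * A - A)) atTop (nhds 0) := by
  obtain ⟨h1, h2, h3, h4⟩ := hMP
  have hAT : Aᵀ = A := by
    have h : A.IsSymm := by simpa using hA.1
    exact h
  -- A * (A * Ad) = A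
  have h5 : A * (A * Ad) = A := by
    calc A * (A * Ad) = Aᵀ * (A * Ad)ᵀ := by rw [hAT, h3]
    _ = ((A * Ad) * A)ᵀ := (transpose_mul _ _).symm
    _ = Aᵀ := by rw [h1]
    _ = A := hAT
  -- Key invariance facts for the iterates
  have hfix : ∀ k, A * Ad * N k = N k ∧ N k * (A * Ad) = N k := by
    intro k
    induction k with
    | zero =>
      constructor
      · rw [hN0, mul_smul_comm, h1]
      · rw [hN0, smul_mul_assoc, h5]
    | succ k ih =>
      obtain ⟨ihl, ihr⟩ := ih
      constructor
      · rw [hNrec, mul_sub, mul_smul_comm, ← mul_assoc, ← mul_assoc, ihl]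
      · rw [hNrec, sub_mul, smul_mul_assoc, ihr, mul_assoc (N k * A) (N k) (A * Ad), ihr]
  set G : ℕ → Matrix (Fin m) (Fin m) ℝ := fun k => A * Ad - A * N k with hG
  have hGdef : ∀ k, G k = A * Ad - A * N k := fun k => rfl
  have hG0 : specNorm (G 0) < 1 := by
    rw [hGdef, hN0, mul_smul_comm]
    exact hinit
  have hGsq : ∀ k, G (k + 1) = G k * G k := by
    intro k
    obtain ⟨hl, hr⟩ := hfix k
    have e1 : (A * Ad) * (A * Ad) = A * Ad := by
      rw [← mul_assoc, h1]
    have e2 : (A * Ad) * (A * N k) = A * N k := by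
      rw [← mul_assoc (A * Ad) A (N k), h1]
    have e3 : (A * N k) * (A * Ad) = A * N k := by
      rw [mul_assoc A (N k) (A * Ad), hr]
    have e4 : A * (N k * A * N k) = (A * N k) * (A * N k) := by
      simp only [mul_assoc]
    rw [hGdef, hGdef, hNrec, mul_sub, mul_smul_comm, e4, sub_mul, mul_sub, mul_sub,
      e1, e2, e3, two_smul]
    abel
  -- the residual equals the norm of G k * A
  have hres : ∀ k, specNorm (A * N k * A - A) = specNorm (G k * A) := by
    intro k
    have : G k * A = A - A * N k * A := by
      rw [hGdef, sub_mul, h1]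
    rw [this, ← specNorm_neg, neg_sub]
  set c := specNorm (G 0) with hc
  have hc0 : 0 ≤ c := specNorm_nonneg _
  have hGk : ∀ k, specNorm (G k) ≤ c ^ (2 ^ k) := by
    intro k
    induction k with
    | zero => simp [hc]
    | succ k ih =>
      calc specNorm (G (k + 1)) = specNorm (G k * G k) := by rw [hGsq]
      _ ≤ specNorm (G k) * specNorm (G k) := specNorm_mul_le _ _
      _ ≤ c ^ (2 ^ k) * c ^ (2 ^ k) := by
          exact mul_le_mul ih ih (specNorm_nonneg _) (le_trans (specNorm_nonneg _) ih)
      _ = c ^ (2 ^ (k + 1)) := by rw [← pow_add]; ring_nf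
  have hGk1 : ∀ k, specNorm (G k) ≤ 1 := by
    intro k
    exact le_trans (hGk k) (pow_le_one₀ hc0 hG0.le)
  constructor
  · apply antitone_nat_of_succ_le
    intro k
    rw [hres, hres]
    calc specNorm (G (k + 1) * A) = specNorm (G k * (G k * A)) := by
          rw [hGsq, mul_assoc]
    _ ≤ specNorm (G k) * specNorm (G k * A) := specNorm_mul_le _ _
    _ ≤ 1 * specNorm (G k * A) :=
        mul_le_mul_of_nonneg_right (hGk1 k) (specNorm_nonneg _)
    _ = specNorm (G k * A) := one_mul _
  · have hbound : ∀ k, specNorm (A * N k * A - A) ≤ c ^ (2 ^ k) * specNorm A := by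
      intro k
      rw [hres]
      calc specNorm (G k * A) ≤ specNorm (G k) * specNorm A := specNorm_mul_le _ _
      _ ≤ c ^ (2 ^ k) * specNorm A :=
          mul_le_mul_of_nonneg_right (hGk k) (specNorm_nonneg _)
    have hpow : Tendsto (fun k : ℕ => c ^ (2 ^ k) * specNorm A) atTop (nhds 0) := by
      have ht1 : Tendsto (fun n : ℕ => c ^ n) atTop (nhds 0) :=
        tendsto_pow_atTop_nhds_zero_of_lt_one hc0 hG0
      have ht2 : Tendsto (fun k : ℕ => 2 ^ k) atTop atTop :=
        tendsto_pow_atTop_atTop_of_one_lt (by norm_num)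
      have := (ht1.comp ht2).mul_const (specNorm A)
      simpa using this
    exact squeeze_zero (fun k => specNorm_nonneg _) hbound hpow
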